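/- For every positive integer n, exp(-1/(8n)) < C(2n, n)·√(π n)/4^n < exp(-1/(8n) + 1/(192 n³)). -/

import Mathlib

open Real Filter Topology

noncomputable def aseq (n : ℕ) : ℝ :=
  ((2 * n).choose n : ℝ) * Real.sqrt (Real.pi * n) / 4 ^ n

lemma aseq_pos {n : ℕ} (hn : 0 < n) : 0 < aseq n := by
  have h1 : 0 < (2 * n).choose n := Nat.choose_pos (by omega)
  have h2 : (0:ℝ) < Real.pi * n := by positivity
  unfold aseq
  positivity

lemma aseq_eq_stirling {n : ℕ} (hn : 0 < n) :
    aseq n = Stirling.stirlingSeq (2 * n) * Real.sqrt Real.pi / (Stirling.stirlingSeq n) ^ 2 := by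
  have hn' : (0:ℝ) < n := by exact_mod_cast hn
  have hfac : ((2 * n).factorial : ℝ) = ((2*n).choose n : ℝ) * n.factorial * n.factorial := by
    have h := Nat.choose_mul_factorial_mul_factorial (show n ≤ 2 * n by omega)
    rw [show 2 * n - n = n by omega] at h
    exact_mod_cast h.symm
  rw [Stirling.stirlingSeq, Stirling.stirlingSeq]
  rw [hfac]
  have h1 : Real.sqrt (2 * (2 * n : ℕ)) = 2 * Real.sqrt n := by
    push_cast
    rw [show (2:ℝ) * (2 * n) = 2^2 * n by ring, Real.sqrt_mul (by positivity), Real.sqrt_sq (by norm_num)]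
  have h2 : Real.sqrt (2 * (n:ℕ)) = Real.sqrt 2 * Real.sqrt n := by
    rw [Real.sqrt_mul (by norm_num)]
  have h3 : Real.sqrt (Real.pi * n) = Real.sqrt Real.pi * Real.sqrt n := by
    rw [Real.sqrt_mul Real.pi_pos.le]
  have h4 : (((2 * n : ℕ):ℝ) / Real.exp 1) ^ (2 * n) = 4 ^ n * ((n:ℝ) / Real.exp 1) ^ (2*n) := by
    push_cast
    rw [show (2 * (n:ℝ)) / Real.exp 1 = 2 * ((n:ℝ)/Real.exp 1) by ring, mul_pow, pow_mul]
    norm_num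
  rw [h1, h4]
  unfold aseq
  rw [h2, h3]
  have hs2 : (0:ℝ) < Real.sqrt 2 := by positivity
  have hsn : (0:ℝ) < Real.sqrt n := Real.sqrt_pos.mpr hn'
  have he : (0:ℝ) < ((n:ℝ)/Real.exp 1) ^ (2*n) := by positivity
  have hne : ((n:ℝ)/Real.exp 1) ^ n * ((n:ℝ)/Real.exp 1) ^ n = ((n:ℝ)/Real.exp 1) ^ (2*n) := by
    rw [← pow_add]; ring_nf
  field_simp
  rw [Real.sq_sqrt (by norm_num : (0:ℝ) ≤ 2), ← pow_mul, mul_comm n 2]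

lemma tendsto_aseq : Tendsto aseq atTop (𝓝 1) := by
  have hpi : (0:ℝ) < Real.sqrt Real.pi := Real.sqrt_pos.mpr Real.pi_pos
  have h2 : Tendsto (fun n : ℕ => Stirling.stirlingSeq (2 * n)) atTop (𝓝 (Real.sqrt Real.pi)) :=
    Stirling.tendsto_stirlingSeq_sqrt_pi.comp (tendsto_atTop_mono (fun n => by simpa using Nat.le_mul_of_pos_left n two_pos) tendsto_id)
  have h3 : Tendsto (fun n : ℕ => Stirling.stirlingSeq (2*n) * Real.sqrt Real.pi / (Stirling.stirlingSeq n)^2)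
      atTop (𝓝 (Real.sqrt Real.pi * Real.sqrt Real.pi / (Real.sqrt Real.pi)^2)) :=
    (h2.mul tendsto_const_nhds).div (Stirling.tendsto_stirlingSeq_sqrt_pi.pow 2) (by positivity)
  have h4 : Real.sqrt Real.pi * Real.sqrt Real.pi / (Real.sqrt Real.pi)^2 = 1 := by
    rw [sq]; field_simp
  rw [h4] at h3
  refine h3.congr' ?_
  filter_upwards [eventually_ge_atTop 1] with n hn
  exact (aseq_eq_stirling hn).symm

noncomputable def gseq (n : ℕ) : ℝ := Real.log (aseq n) + 1 / (8 * n)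

lemma tendsto_gseq : Tendsto gseq atTop (𝓝 0) := by
  have h1 : Tendsto (fun n : ℕ => Real.log (aseq n)) atTop (𝓝 0) := by
    have := (Real.continuousAt_log one_ne_zero).tendsto.comp tendsto_aseq
    rw [Real.log_one] at this
    exact this
  have h2 : Tendsto (fun n : ℕ => 1 / (8 * (n:ℝ))) atTop (𝓝 0) := by
    have : Tendsto (fun n : ℕ => 1 / (n:ℝ)) atTop (𝓝 0) := tendsto_one_div_atTop_nhds_zero_nat
    have h3 : Tendsto (fun n : ℕ => (1:ℝ)/8 * (1/n)) atTop (𝓝 ((1/8) * 0)) := this.const_mul _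
    rw [mul_zero] at h3
    exact h3.congr' (Eventually.of_forall fun n => by ring)
  have h := h1.add h2
  rw [add_zero] at h
  exact h

lemma ratio_sq {n : ℕ} (hn : 0 < n) :
    (aseq n / aseq (n+1)) ^ 2 = 4*n*(n+1) / (2*n+1)^2 := by
  have hn' : (0:ℝ) < n := by exact_mod_cast hn
  have hC : ((n:ℝ) + 1) * ((2 * (n+1)).choose (n+1) : ℝ) = 2 * (2 * n + 1) * ((2*n).choose n : ℝ) := by
    have := Nat.succ_mul_centralBinom_succ n
    rw [Nat.centralBinom, Nat.centralBinom] at this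
    exact_mod_cast this
  have hCpos : (0:ℝ) < ((2*n).choose n : ℝ) := by
    exact_mod_cast Nat.choose_pos (by omega : n ≤ 2*n)
  have hC1pos : (0:ℝ) < ((2*(n+1)).choose (n+1) : ℝ) := by
    exact_mod_cast Nat.choose_pos (by omega : n+1 ≤ 2*(n+1))
  have hC1 : ((2*(n+1)).choose (n+1) : ℝ) = 2*(2*n+1)*((2*n).choose n:ℝ)/((n:ℝ)+1) := by
    field_simp
    linarith [hC]
  unfold aseq
  push_cast [hC1]
  rw [div_pow, div_pow, div_pow, mul_pow, mul_pow,
    Real.sq_sqrt (by positivity : (0:ℝ) ≤ Real.pi * n),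
    Real.sq_sqrt (by positivity : (0:ℝ) ≤ Real.pi * ((n:ℝ)+1))]
  field_simp
  ring


lemma log_lb {t : ℝ} (ht : 0 < t) : t - t^2/2 < Real.log (1+t) := by
  have key : StrictMonoOn (fun x : ℝ => Real.log (1+x) - x + x^2/2) (Set.Ici 0) := by
    apply strictMonoOn_of_deriv_pos (convex_Ici 0)
    · refine ContinuousOn.add (ContinuousOn.sub ?_ continuousOn_id) ?_
      · exact (continuousOn_const.add continuousOn_id).log
          (fun x hx => by simp only [Set.mem_Ici] at hx; intro h; simp only [Pi.add_apply, id_eq] at h; linarith)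
      · exact (continuousOn_id.pow 2).div_const 2
    · intro x hx
      rw [interior_Ici] at hx
      have hx' : (0:ℝ) < x := hx
      have h1 : HasDerivAt (fun x : ℝ => Real.log (1+x) - x + x^2/2) (1/(1+x) - 1 + x) x := by
        have hl : HasDerivAt (fun y : ℝ => Real.log (1+y)) (1/(1+x)) x := by
          have h0 : HasDerivAt (fun y : ℝ => 1 + y) 1 x := (hasDerivAt_id x).const_add 1
          have := (Real.hasDerivAt_log (by linarith : (1:ℝ)+x ≠ 0)).comp x h0
          simpa [one_div, Function.comp_def] using this
        have hq : HasDerivAt (fun y : ℝ => y^2/2) x x := by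
          simpa using (hasDerivAt_pow 2 x).div_const 2
        exact (hl.sub (hasDerivAt_id' x)).add hq
      rw [h1.deriv]
      have h2 : 1/(1+x) - 1 + x = x^2/(1+x) := by field_simp; ring
      rw [h2]; positivity
  have h0 := key (Set.self_mem_Ici) (Set.mem_Ici.mpr ht.le) ht
  simp only [add_zero, Real.log_one] at h0
  norm_num at h0
  linarith

lemma log_ub {t : ℝ} (ht : 0 < t) : Real.log (1+t) < t := by
  have := Real.log_lt_sub_one_of_pos (by linarith : (0:ℝ) < 1+t) (by linarith : (1:ℝ)+t ≠ 1)
  linarith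

lemma gseq_sub {n : ℕ} (hn : 0 < n) :
    gseq n - gseq (n + 1) =
      (1 / (4*(n:ℝ)*(n+1)) - Real.log (1 + 1 / (4*(n:ℝ)*(n+1)))) / 2 := by
  have hn' : (0:ℝ) < n := by exact_mod_cast hn
  have ha := aseq_pos hn
  have ha1 := aseq_pos (Nat.succ_pos n)
  have hinv : 4*(n:ℝ)*(n+1) / (2*(n:ℝ)+1)^2 = (1 + 1/(4*(n:ℝ)*(n+1)))⁻¹ := by
    rw [show (1:ℝ) + 1/(4*(n:ℝ)*(n+1)) = (2*(n:ℝ)+1)^2/(4*(n:ℝ)*(n+1)) by field_simp; ring]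
    rw [inv_div]
  have h2 : 2 * (Real.log (aseq n) - Real.log (aseq (n+1)))
      = - Real.log (1 + 1/(4*(n:ℝ)*(n+1))) := by
    rw [← Real.log_div ha.ne' ha1.ne']
    rw [show (2:ℝ) * Real.log (aseq n / aseq (n+1)) = Real.log ((aseq n / aseq (n+1))^2) by
      rw [Real.log_pow]; push_cast; ring]
    rw [ratio_sq hn, hinv, Real.log_inv]
  have h3 : 1/(8*(n:ℝ)) - 1/(8*((n:ℝ)+1)) = (1/(4*(n:ℝ)*(n+1)))/2 := by
    field_simp; ring
  unfold gseq
  push_cast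
  linarith [h2, h3]

lemma gseq_sub_pos {n : ℕ} (hn : 0 < n) : 0 < gseq n - gseq (n+1) := by
  have hn' : (0:ℝ) < n := by exact_mod_cast hn
  have ht : (0:ℝ) < 1/(4*(n:ℝ)*(n+1)) := by positivity
  have := log_ub ht
  rw [gseq_sub hn]
  linarith

lemma gseq_sub_lt {n : ℕ} (hn : 0 < n) :
    gseq n - gseq (n+1) < (1/192) * (1/(n:ℝ)^3 - 1/((n:ℝ)+1)^3) := by
  have hn' : (0:ℝ) < n := by exact_mod_cast hn
  set t : ℝ := 1/(4*(n:ℝ)*(n+1)) with htdef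
  have ht : (0:ℝ) < t := by positivity
  have h1 := log_lb ht
  rw [gseq_sub hn]
  have h3 : (t - Real.log (1+t))/2 < t^2/4 := by linarith
  refine h3.trans_le ?_
  have e1 : t^2/4 = 1/(64*(n:ℝ)^2*((n:ℝ)+1)^2) := by rw [htdef]; field_simp; ring
  have e2 : (1:ℝ)/192 * (1/(n:ℝ)^3 - 1/((n:ℝ)+1)^3)
      = (3*(n:ℝ)^2+3*(n:ℝ)+1)/(192*(n:ℝ)^3*((n:ℝ)+1)^3) := by field_simp; ring
  rw [e1, e2, div_le_div_iff₀ (by positivity) (by positivity)]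
  nlinarith [hn']

lemma tendsto_gseq_shift (n : ℕ) : Tendsto (fun m => gseq (n + m)) atTop (𝓝 0) :=
  tendsto_gseq.comp (tendsto_atTop_mono (fun m => Nat.le_add_left m n) tendsto_id)

lemma gseq_nonneg {n : ℕ} (hn : 0 < n) : 0 ≤ gseq n := by
  have hmono : ∀ m, gseq (n + m) ≤ gseq n := by
    intro m
    induction m with
    | zero => simp
    | succ m ih =>
        have := gseq_sub_pos (show 0 < n + m by omega)
        have he : n + (m+1) = (n+m) + 1 := by omega
        rw [he]
        linarith
  exact le_of_tendsto (tendsto_gseq_shift n) (Eventually.of_forall hmono)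

lemma gseq_pos {n : ℕ} (hn : 0 < n) : 0 < gseq n := by
  have h1 := gseq_sub_pos hn
  have h2 := gseq_nonneg (show 0 < n + 1 by omega)
  linarith

lemma gseq_le {n : ℕ} (hn : 0 < n) : gseq n ≤ 1/(192*(n:ℝ)^3) := by
  have hn' : (0:ℝ) < n := by exact_mod_cast hn
  have key : ∀ m, gseq n - gseq (n + m) ≤ (1/192) * (1/(n:ℝ)^3 - 1/((n:ℝ)+m)^3) := by
    intro m
    induction m with
    | zero => norm_num
    | succ m ih =>
        have hd := gseq_sub_lt (show 0 < n + m by omega)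
        have he : n + (m+1) = (n+m) + 1 := by omega
        have hc : ((n + m : ℕ) : ℝ) = (n:ℝ) + m := by push_cast; ring
        rw [hc] at hd
        rw [he]
        push_cast
        push_cast at ih
        rw [show (n:ℝ) + ((m:ℝ) + 1) = (n:ℝ) + (m:ℝ) + 1 by ring]
        linarith
  have key2 : ∀ m, gseq n - 1/(192*(n:ℝ)^3) ≤ gseq (n + m) := by
    intro m
    have h := key m
    have hm : (0:ℝ) < (n:ℝ) + m := by positivity
    have h2 : (0:ℝ) < 1/((n:ℝ)+m)^3 := by positivity
    have h3 : (1:ℝ)/192 * (1/(n:ℝ)^3 - 1/((n:ℝ)+m)^3) ≤ 1/(192*(n:ℝ)^3) := by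
      rw [show (1:ℝ)/(192*(n:ℝ)^3) = 1/192 * (1/(n:ℝ)^3) by ring]
      nlinarith
    linarith
  have := ge_of_tendsto (tendsto_gseq_shift n) (Eventually.of_forall key2)
  linarith

lemma gseq_lt {n : ℕ} (hn : 0 < n) : gseq n < 1/(192*(n:ℝ)^3) := by
  have hn' : (0:ℝ) < n := by exact_mod_cast hn
  have h1 := gseq_sub_lt hn
  have h2 := gseq_le (show 0 < n + 1 by omega)
  have hc : ((n + 1 : ℕ) : ℝ) = (n:ℝ) + 1 := by push_cast; ring
  rw [hc] at h2
  have h3 : (1:ℝ)/(192*((n:ℝ)+1)^3) = 1/192 * (1/((n:ℝ)+1)^3) := by rw [one_div, one_div, one_div, mul_inv]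
  have h4 : (1:ℝ)/(192*(n:ℝ)^3) = 1/192 * (1/(n:ℝ)^3) := by rw [one_div, one_div, one_div, mul_inv]
  rw [h3] at h2
  rw [h4]
  linarith

theorem stmt18 (n : ℕ) (hn : 0 < n) :
    Real.exp (-1 / (8 * n)) < ((2 * n).choose n : ℝ) * Real.sqrt (Real.pi * n) / 4 ^ n ∧
      ((2 * n).choose n : ℝ) * Real.sqrt (Real.pi * n) / 4 ^ n <
        Real.exp (-1 / (8 * n) + 1 / (192 * n ^ 3)) := by
  have hn' : (0:ℝ) < n := by exact_mod_cast hn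
  have ha := aseq_pos hn
  have hlog : Real.log (aseq n) = gseq n - 1/(8*(n:ℝ)) := by unfold gseq; ring
  have h1 := gseq_pos hn
  have h2 := gseq_lt hn
  have hexp : ((2 * n).choose n : ℝ) * Real.sqrt (Real.pi * n) / 4 ^ n
      = Real.exp (gseq n - 1/(8*(n:ℝ))) := by
    rw [← hlog, Real.exp_log ha]; rfl
  rw [hexp]
  constructor
  · apply Real.exp_lt_exp.mpr
    rw [neg_div]
    linarith
  · apply Real.exp_lt_exp.mpr
    rw [neg_div, show (1:ℝ)/(192*(n:ℝ)^3) = 1/(192*(n:ℝ)^3) from rfl]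
    have : (1:ℝ)/(192*((n:ℕ):ℝ)^3) = 1/(192*(n:ℝ)^3) := rfl
    linarith
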